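/- An automorphism σ of an irreducible reduced finite root system R preserves some base of R if and only if no root of R vanishes on the fixed-point sublattice X̌^σ of the coweight lattice X̌ = Hom(ZR, Z); equivalently, σ is based iff there exists a vector v̌ fixed by σ with ⟨α, v̌⟩ ≠ 0 for all α ∈ R. -/

import Mathlib

open scoped InnerProductSpace
open Module

variable {V : Type*} [NormedAddCommGroup V] [InnerProductSpace ℝ V] [FiniteDimensional ℝ V]

/-- The Cartan pairing `⟨β, α̌⟩ = 2⟪α, β⟫/⟪α, α⟫`. -/
noncomputable def cpair (α β : V) : ℝ := 2 * ⟪α, β⟫_ℝ / ⟪α, α⟫_ℝ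

/-- Axioms for a (crystallographic) finite root system `R` spanning `V`. -/
structure IsRootSystem (R : Finset V) : Prop where
  nonzero : ∀ α ∈ R, α ≠ 0
  span : Submodule.span ℝ (R : Set V) = ⊤
  reflMem : ∀ α ∈ R, ∀ β ∈ R, β - cpair α β • α ∈ R
  pairInt : ∀ α ∈ R, ∀ β ∈ R, ∃ n : ℤ, (n : ℝ) = cpair α β

/-- `R` is reduced: the only multiples of a root which are roots are `±` itself. -/
def IsReducedRS (R : Finset V) : Prop := ∀ α ∈ R, ∀ t : ℝ, t • α ∈ R → t = 1 ∨ t = -1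

/-- `R` is irreducible: it admits no nontrivial orthogonal decomposition. -/
def IsIrreducibleRS (R : Finset V) : Prop :=
  (R : Set V).Nonempty ∧
    ∀ S : Finset V, S ⊆ R → (∀ α ∈ S, ∀ β ∈ R, β ∉ S → ⟪α, β⟫_ℝ = 0) → S = ∅ ∨ S = R

/-- `Δ` is a base (set of simple roots) of the root system `R`. -/
structure IsBaseRS (R Δ : Finset V) : Prop where
  subset : Δ ⊆ R
  indep : LinearIndependent ℝ (fun β : (Δ : Set V) => (β : V))
  span : Submodule.span ℝ (Δ : Set V) = ⊤
  decomp : ∀ α ∈ R,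
      (∃ c : V → ℤ, α = ∑ β ∈ Δ, (c β : ℝ) • β ∧ ∀ β ∈ Δ, 0 ≤ c β) ∨
      (∃ c : V → ℤ, α = ∑ β ∈ Δ, (c β : ℝ) • β ∧ ∀ β ∈ Δ, c β ≤ 0)

/-- The Weyl group of `R`: the subgroup of `GL(V)` generated by the root reflections. -/
def weylGroup (R : Finset V) : Subgroup (V ≃ₗ[ℝ] V) :=
  Subgroup.closure {g | ∃ α ∈ R, ∀ v, g v = v - cpair α v • α}

/-- The coroot-type functional `v ↦ 2⟪α, v⟫/⟪α, α⟫` as a linear functional. -/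
noncomputable def coformL (α : V) : Module.Dual ℝ V where
  toFun v := 2 * ⟪α, v⟫_ℝ / ⟪α, α⟫_ℝ
  map_add' x y := by simp only [inner_add_right]; ring
  map_smul' t x := by
    simp only [real_inner_smul_right, smul_eq_mul, RingHom.id_apply]
    ring

/-- The reflection in the root `α` (the identity as junk value if `α` is degenerate). -/
noncomputable def rootRefl (α : V) : V ≃ₗ[ℝ] V :=
  if h : coformL α α = 2 then Module.reflection h else LinearEquiv.refl ℝ V

/-- The action of `GL(V)` on the dual space: `(g • f) = f ∘ g⁻¹`. -/
def dAct (g : V ≃ₗ[ℝ] V) (f : Module.Dual ℝ V) : Module.Dual ℝ V :=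
  f ∘ₗ (g.symm : V →ₗ[ℝ] V)

/-- The coweight lattice `X̌ = Hom(ℤR, ℤ)`, realised as the integer-valued
linear functionals inside `V* = ℝ ⊗ X̌`. -/
def coweightLat (R : Finset V) : Set (Module.Dual ℝ V) :=
  {f | ∀ α ∈ R, ∃ n : ℤ, f α = (n : ℝ)}

set_option linter.unusedSectionVars false
set_option linter.unusedVariables false
set_option linter.unusedTactic false

lemma RS.neg_mem {R : Finset V} (h : IsRootSystem R) {α : V} (hα : α ∈ R) : -α ∈ R := by
  have h2 : cpair α α = 2 := by
    have hne : ⟪α, α⟫_ℝ ≠ 0 := by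
      simpa [inner_self_eq_zero] using h.nonzero α hα
    rw [cpair]; field_simp
  have := h.reflMem α hα α hα
  rw [h2] at this
  simpa [two_smul, sub_add_eq_sub_sub] using this

lemma RS.sub_mem {R : Finset V} (h : IsRootSystem R) {α β : V} (hα : α ∈ R) (hβ : β ∈ R)
    (hne : α ≠ β) (hpos : 0 < ⟪α, β⟫_ℝ) : α - β ∈ R := by
  have hαα : (0:ℝ) < ⟪α, α⟫_ℝ :=
    lt_of_le_of_ne real_inner_self_nonneg
      (fun e => h.nonzero α hα (inner_self_eq_zero.mp e.symm))
  have hββ : (0:ℝ) < ⟪β, β⟫_ℝ :=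
    lt_of_le_of_ne real_inner_self_nonneg
      (fun e => h.nonzero β hβ (inner_self_eq_zero.mp e.symm))
  obtain ⟨n, hn⟩ := h.pairInt α hα β hβ
  obtain ⟨m, hm⟩ := h.pairInt β hβ α hα
  have hn' : (n:ℝ) = 2 * ⟪α, β⟫_ℝ / ⟪α, α⟫_ℝ := hn
  have hm' : (m:ℝ) = 2 * ⟪α, β⟫_ℝ / ⟪β, β⟫_ℝ := by
    rw [hm, cpair, real_inner_comm]
  have hn0 : 0 < (n:ℝ) := by rw [hn']; positivity
  have hm0 : 0 < (m:ℝ) := by rw [hm']; positivity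
  have hn1 : 1 ≤ n := by exact_mod_cast hn0
  have hm1 : 1 ≤ m := by exact_mod_cast hm0
  have hcs : ⟪α, β⟫_ℝ * ⟪α, β⟫_ℝ ≤ ⟪α, α⟫_ℝ * ⟪β, β⟫_ℝ := real_inner_mul_inner_self_le α β
  have hnm4 : (n:ℝ) * (m:ℝ) ≤ 4 := by
    rw [hn', hm']
    rw [div_mul_div_comm, div_le_iff₀ (by positivity)]
    nlinarith
  have hnm4' : n * m ≤ 4 := by exact_mod_cast hnm4
  rcases eq_or_lt_of_le hm1 with hm2 | hm2
  · -- m = 1, α - β ∈ R from reflection in β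
    have := h.reflMem β hβ α hα
    rw [← hm, ← hm2] at this
    simpa using this
  rcases eq_or_lt_of_le hn1 with hn2 | hn2
  · have := h.reflMem α hα β hβ
    rw [← hn, ← hn2] at this
    have hsub : β - α ∈ R := by simpa using this
    have := RS.neg_mem h hsub
    simpa using this
  · exfalso
    have hn22 : n = 2 := by nlinarith
    have hm22 : m = 2 := by nlinarith
    have e1 : ⟪α, β⟫_ℝ = ⟪α, α⟫_ℝ := by
      rw [hn22] at hn'
      field_simp at hn'
      push_cast at hn'
      linarith
    have e2 : ⟪α, β⟫_ℝ = ⟪β, β⟫_ℝ := by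
      rw [hm22] at hm'
      field_simp at hm'
      push_cast at hm'
      linarith
    have hc : ⟪β, α⟫_ℝ = ⟪α, β⟫_ℝ := real_inner_comm α β
    have h0 : ⟪α - β, α - β⟫_ℝ = 0 := by
      rw [inner_sub_left, inner_sub_right, inner_sub_right]
      linarith
    exact hne (sub_eq_zero.mp (inner_self_eq_zero.mp h0))

lemma linearIndependent_of_obtuse (Δ : Finset V) (f : Module.Dual ℝ V)
    (hpos : ∀ α ∈ Δ, 0 < f α)
    (hob : ∀ α ∈ Δ, ∀ β ∈ Δ, α ≠ β → ⟪α, β⟫_ℝ ≤ 0) :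
    LinearIndependent ℝ (fun β : (Δ : Set V) => (β : V)) := by
  classical
  rw [Fintype.linearIndependent_iff]
  intro g hg
  set sP := Finset.univ.filter (fun i : (Δ : Set V) => 0 < g i) with hsP
  set sN := Finset.univ.filter (fun i : (Δ : Set V) => g i < 0) with hsN
  have hmem : ∀ i : (Δ : Set V), (i : V) ∈ Δ := fun i => i.2
  have hsplit : ∑ i ∈ sP, g i • (i:V) = ∑ i ∈ sN, (-g i) • (i:V) := by
    have h1 : ∑ i ∈ sP, g i • (i:V) + ∑ i ∈ Finset.univ.filter (fun i : (Δ : Set V) => ¬ 0 < g i), g i • (i:V) = 0 := by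
      rw [Finset.sum_filter_add_sum_filter_not]; exact hg
    have h2 : ∑ i ∈ Finset.univ.filter (fun i : (Δ : Set V) => ¬ 0 < g i), g i • (i:V)
        = ∑ i ∈ sN, g i • (i:V) := by
      symm
      apply Finset.sum_subset
      · intro i hi
        simp only [hsN, Finset.mem_filter, Finset.mem_univ, true_and] at hi ⊢
        linarith
      · intro i hi hni
        simp only [hsN, Finset.mem_filter, Finset.mem_univ, true_and] at hi hni
        have : g i = 0 := by push_neg at hni; linarith
        simp [this]
    rw [h2] at h1
    have := eq_neg_of_add_eq_zero_left h1
    rw [this, ← Finset.sum_neg_distrib]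
    exact Finset.sum_congr rfl fun i _ => (neg_smul (g i) (i:V)).symm
  have hip : ⟪∑ i ∈ sP, g i • (i:V), ∑ i ∈ sP, g i • (i:V)⟫_ℝ ≤ 0 := by
    nth_rewrite 2 [hsplit]
    rw [inner_sum]
    apply Finset.sum_nonpos
    intro j hj
    rw [real_inner_smul_right, sum_inner]
    have hgj : 0 < -g j := by
      simp only [hsN, Finset.mem_filter] at hj; linarith [hj.2]
    apply mul_nonpos_of_nonneg_of_nonpos (le_of_lt hgj)
    apply Finset.sum_nonpos
    intro i hi
    rw [real_inner_smul_left]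
    have hgi : 0 < g i := by
      simp only [hsP, Finset.mem_filter] at hi; exact hi.2
    have hij : (i : V) ≠ (j : V) := by
      intro e
      have : i = j := Subtype.ext e
      subst this
      simp only [hsN, Finset.mem_filter] at hj
      linarith [hj.2]
    exact mul_nonpos_of_nonneg_of_nonpos (le_of_lt hgi) (hob _ (hmem i) _ (hmem j) hij)
  have hw0 : ∑ i ∈ sP, g i • (i:V) = 0 := real_inner_self_nonpos.mp hip
  have hsPe : sP = ∅ := by
    by_contra hne
    have hnonempty : sP.Nonempty := Finset.nonempty_of_ne_empty hne
    have : (0:ℝ) < ∑ i ∈ sP, g i * f (i:V) := by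
      apply Finset.sum_pos
      · intro i hi
        simp only [hsP, Finset.mem_filter] at hi
        exact mul_pos hi.2 (hpos _ (hmem i))
      · exact hnonempty
    have : ∑ i ∈ sP, g i * f (i:V) = 0 := by
      have := congrArg f hw0
      simpa [map_sum, map_smul, smul_eq_mul] using this
    linarith
  have hsNe : sN = ∅ := by
    by_contra hne
    have hnonempty : sN.Nonempty := Finset.nonempty_of_ne_empty hne
    have hz : ∑ i ∈ sN, (-g i) • (i:V) = 0 := by rw [← hsplit, hw0]
    have : (0:ℝ) < ∑ i ∈ sN, (-g i) * f (i:V) := by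
      apply Finset.sum_pos
      · intro i hi
        simp only [hsN, Finset.mem_filter] at hi
        exact mul_pos (by linarith [hi.2]) (hpos _ (hmem i))
      · exact hnonempty
    have : ∑ i ∈ sN, (-g i) * f (i:V) = 0 := by
      have := congrArg f hz
      simpa [map_sum, map_smul, smul_eq_mul] using this
    linarith
  intro i
  by_contra hgi
  rcases lt_or_gt_of_ne hgi with hlt | hgt
  · have : i ∈ sN := by simp [hsN, hlt]
    rw [hsNe] at this; exact absurd this (Finset.notMem_empty i)
  · have : i ∈ sP := by simp [hsP, hgt]
    rw [hsPe] at this; exact absurd this (Finset.notMem_empty i)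

open Classical in
noncomputable def posSet (R : Finset V) (f : Module.Dual ℝ V) : Finset V :=
  R.filter fun α => 0 < f α

open Classical in
noncomputable def baseSet (R : Finset V) (f : Module.Dual ℝ V) : Finset V :=
  (posSet R f).filter fun α => ¬ ∃ β ∈ posSet R f, ∃ γ ∈ posSet R f, α = β + γ

lemma mem_posSet {R : Finset V} {f : Module.Dual ℝ V} {α : V} :
    α ∈ posSet R f ↔ α ∈ R ∧ 0 < f α := by
  classical simp [posSet]

lemma mem_baseSet {R : Finset V} {f : Module.Dual ℝ V} {α : V} :
    α ∈ baseSet R f ↔ α ∈ posSet R f ∧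
      ¬ ∃ β ∈ posSet R f, ∃ γ ∈ posSet R f, α = β + γ := by
  classical simp [baseSet]

lemma baseSet_isBase (R : Finset V) (hRS : IsRootSystem R) (f : Module.Dual ℝ V)
    (hfcw : ∀ α ∈ R, ∃ n : ℤ, f α = (n : ℝ)) (hfne : ∀ α ∈ R, f α ≠ 0) :
    IsBaseRS R (baseSet R f) := by
  classical
  set P := posSet R f with hP
  set Δ := baseSet R f with hΔdef
  have hPR : P ⊆ R := fun α hα => (mem_posSet.mp hα).1
  have hΔP : Δ ⊆ P := fun α hα => (mem_baseSet.mp hα).1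
  have hΔR : Δ ⊆ R := fun α hα => hPR (hΔP hα)
  have hone : ∀ α ∈ P, (1:ℝ) ≤ f α := by
    intro α hα
    obtain ⟨hαR, hpos⟩ := mem_posSet.mp hα
    obtain ⟨n, hn⟩ := hfcw α hαR
    have : 0 < n := by exact_mod_cast hn ▸ hpos
    have : (1:ℤ) ≤ n := this
    calc (1:ℝ) ≤ (n:ℝ) := by exact_mod_cast this
    _ = f α := hn.symm
  -- key decomposition lemma
  have key : ∀ n : ℕ, ∀ α ∈ P, f α ≤ (n : ℝ) →
      ∃ c : V → ℤ, α = ∑ β ∈ Δ, (c β : ℝ) • β ∧ ∀ β ∈ Δ, 0 ≤ c β := by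
    intro n
    induction n with
    | zero =>
      intro α hα hle
      exact absurd hle (by push_cast; linarith [hone α hα])
    | succ n ih =>
      intro α hα hle
      by_cases hαΔ : α ∈ Δ
      · refine ⟨fun v => if v = α then 1 else 0, ?_, ?_⟩
        · rw [Finset.sum_eq_single_of_mem α hαΔ]
          · simp
          · intro b _ hb; simp [hb]
        · intro β _; by_cases h : β = α <;> simp [h]
      · have hdec : ∃ β ∈ P, ∃ γ ∈ P, α = β + γ := by
          by_contra h
          exact hαΔ (mem_baseSet.mpr ⟨hα, h⟩)
        obtain ⟨β, hβ, γ, hγ, heq⟩ := hdec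
        have hfsum : f α = f β + f γ := by rw [heq, map_add]
        have hβle : f β ≤ (n : ℝ) := by
          have := hone γ hγ; push_cast at hle ⊢; linarith
        have hγle : f γ ≤ (n : ℝ) := by
          have := hone β hβ; push_cast at hle ⊢; linarith
        obtain ⟨c₁, hc₁, hc₁n⟩ := ih β hβ hβle
        obtain ⟨c₂, hc₂, hc₂n⟩ := ih γ hγ hγle
        refine ⟨c₁ + c₂, ?_, fun β hβ => add_nonneg (hc₁n β hβ) (hc₂n β hβ)⟩
        rw [heq, hc₁, hc₂, ← Finset.sum_add_distrib]
        apply Finset.sum_congr rfl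
        intro x _
        simp only [Pi.add_apply, Int.cast_add, add_smul]
  have decompP : ∀ α ∈ P, ∃ c : V → ℤ, α = ∑ β ∈ Δ, (c β : ℝ) • β ∧ ∀ β ∈ Δ, 0 ≤ c β := by
    intro α hα
    obtain ⟨n, hn⟩ := exists_nat_ge (f α)
    exact key n α hα hn
  -- obtuseness
  have hobtuse : ∀ α ∈ Δ, ∀ β ∈ Δ, α ≠ β → ⟪α, β⟫_ℝ ≤ 0 := by
    intro α hα β hβ hne
    by_contra hip
    push_neg at hip
    have hsub : α - β ∈ R := RS.sub_mem hRS (hΔR hα) (hΔR hβ) hne hip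
    have hfne' := hfne _ hsub
    have hfab : f (α - β) = f α - f β := map_sub f α β
    rcases lt_or_gt_of_ne hfne' with hlt | hgt
    · -- f(α-β) < 0, so β - α ∈ P, β = (β-α) + α decomposable
      have hba : β - α ∈ R := by
        have := RS.neg_mem hRS hsub
        simpa [neg_sub] using this
      have hbaP : β - α ∈ P := mem_posSet.mpr ⟨hba, by
        have : f (β - α) = f β - f α := map_sub f β α
        rw [this]; rw [hfab] at hlt; linarith⟩
      have := (mem_baseSet.mp hβ).2
      exact this ⟨β - α, hbaP, α, hΔP hα, by abel⟩
    · have habP : α - β ∈ P := mem_posSet.mpr ⟨hsub, by rw [hfab]; rw [hfab] at hgt; linarith⟩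
      have := (mem_baseSet.mp hα).2
      exact this ⟨α - β, habP, β, hΔP hβ, by abel⟩
  -- span
  have hspan : Submodule.span ℝ ((Δ : Set V)) = ⊤ := by
    rw [eq_top_iff, ← hRS.span]
    rw [Submodule.span_le]
    intro α hαR
    rw [Finset.mem_coe] at hαR
    rcases lt_or_gt_of_ne (hfne α hαR) with hlt | hgt
    · have hnα : -α ∈ P := mem_posSet.mpr ⟨RS.neg_mem hRS hαR, by
        rw [map_neg]; linarith⟩
      obtain ⟨c, hc, -⟩ := decompP _ hnα
      have : -α ∈ Submodule.span ℝ (Δ : Set V) := by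
        rw [hc]
        exact Submodule.sum_mem _ fun β hβ =>
          Submodule.smul_mem _ _ (Submodule.subset_span (Finset.mem_coe.mpr hβ))
      simpa using Submodule.neg_mem _ this
    · have hαP : α ∈ P := mem_posSet.mpr ⟨hαR, hgt⟩
      obtain ⟨c, hc, -⟩ := decompP _ hαP
      rw [hc]
      exact Submodule.sum_mem _ fun β hβ =>
        Submodule.smul_mem _ _ (Submodule.subset_span (Finset.mem_coe.mpr hβ))
  refine ⟨hΔR, ?_, hspan, ?_⟩
  · exact linearIndependent_of_obtuse Δ f
      (fun α hα => (mem_posSet.mp (hΔP hα)).2) hobtuse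
  · intro α hαR
    rcases lt_or_gt_of_ne (hfne α hαR) with hlt | hgt
    · right
      have hnα : -α ∈ P := mem_posSet.mpr ⟨RS.neg_mem hRS hαR, by rw [map_neg]; linarith⟩
      obtain ⟨c, hc, hcn⟩ := decompP _ hnα
      refine ⟨-c, ?_, fun β hβ => by simpa using hcn β hβ⟩
      have : α = -∑ β ∈ Δ, (c β : ℝ) • β := by rw [← hc]; simp
      rw [this, ← Finset.sum_neg_distrib]
      apply Finset.sum_congr rfl
      intro x _
      simp only [Pi.neg_apply, Int.cast_neg, neg_smul]
    · left
      exact decompP α (mem_posSet.mpr ⟨hαR, hgt⟩)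

/-- An automorphism `σ` of an irreducible reduced finite root
system `R` preserves some base of `R` if and only if there is a `σ`-fixed vector
`v̌` in the coweight lattice `X̌ = Hom(ℤR, ℤ)` with `⟨α, v̌⟩ ≠ 0` for all roots
`α` (equivalently, no root vanishes on the fixed-point sublattice `X̌^σ`). -/
theorem based_iff_no_root_vanishes_on_fixed_lattice
    {V : Type*} [NormedAddCommGroup V] [InnerProductSpace ℝ V] [FiniteDimensional ℝ V]
    (R : Finset V) (hRS : IsRootSystem R) (hred : IsReducedRS R)
    (hirr : IsIrreducibleRS R)
    (σ : V ≃ₗ[ℝ] V) (hσ : (σ : V → V) '' R = R) :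
    (∃ Δ : Finset V, IsBaseRS R Δ ∧ (σ : V → V) '' Δ = Δ) ↔
      (∃ f : Module.Dual ℝ V, f ∈ coweightLat R ∧ dAct σ f = f ∧ ∀ α ∈ R, f α ≠ 0) := by
  classical
  have hσR : ∀ {α : V}, α ∈ R → σ α ∈ R := by
    intro α hα
    have : σ α ∈ (σ : V → V) '' (R : Set V) := Set.mem_image_of_mem σ hα
    rw [hσ] at this
    exact_mod_cast this
  have hσR' : ∀ {α : V}, α ∈ R → σ.symm α ∈ R := by
    intro α hα
    have : (α : V) ∈ (σ : V → V) '' (R : Set V) := by rw [hσ]; exact_mod_cast hα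
    obtain ⟨x, hx, hxe⟩ := this
    have : σ.symm α = x := by rw [← hxe]; exact σ.symm_apply_apply x
    rw [this]; exact_mod_cast hx
  constructor
  · rintro ⟨Δ, hbase, hσΔ⟩
    have hsp : ⊤ ≤ Submodule.span ℝ (Set.range fun β : (Δ : Set V) => (β : V)) := by
      rw [Subtype.range_coe]; exact hbase.span.ge
    let b : Basis (Δ : Set V) ℝ V := Basis.mk hbase.indep hsp
    let f : Module.Dual ℝ V := b.constr ℝ (fun _ => (1 : ℝ))
    have hb : ∀ i : (Δ : Set V), b i = (i : V) := fun i => Basis.mk_apply _ _ _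
    have hfΔ : ∀ β ∈ Δ, f β = 1 := by
      intro β hβ
      have : f (b ⟨β, Finset.mem_coe.mpr hβ⟩) = 1 := b.constr_basis ℝ _ _
      rwa [hb] at this
    have hfval : ∀ α ∈ R, ∀ c : V → ℤ, α = ∑ β ∈ Δ, (c β : ℝ) • β →
        f α = ∑ β ∈ Δ, (c β : ℝ) := by
      intro α hα c hc
      rw [hc, map_sum]
      apply Finset.sum_congr rfl
      intro β hβ
      rw [map_smul, smul_eq_mul, hfΔ β hβ, mul_one]
    refine ⟨f, ?_, ?_, ?_⟩
    · intro α hα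
      rcases hbase.decomp α hα with ⟨c, hc, -⟩ | ⟨c, hc, -⟩ <;>
      · refine ⟨∑ β ∈ Δ, c β, ?_⟩
        rw [hfval α hα c hc]
        push_cast
        rfl
    · -- σ-invariance
      apply b.ext
      intro i
      have hiΔ : (i : V) ∈ Δ := Finset.mem_coe.mp i.2
      have hsymm : σ.symm (i : V) ∈ Δ := by
        have : (i : V) ∈ (σ : V → V) '' (Δ : Set V) := by
          rw [hσΔ]; exact i.2
        obtain ⟨x, hx, hxe⟩ := this
        have : σ.symm (i : V) = x := by rw [← hxe]; exact σ.symm_apply_apply x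
        rw [this]; exact_mod_cast hx
      have : dAct σ f (b i) = f (σ.symm (i : V)) := by
        rw [hb]; rfl
      rw [this, hb, hfΔ _ hsymm, hfΔ _ hiΔ]
    · intro α hα
      rcases hbase.decomp α hα with ⟨c, hc, hcn⟩ | ⟨c, hc, hcn⟩
      · rw [hfval α hα c hc]
        intro h0
        have hall : ∀ β ∈ Δ, (c β : ℝ) = 0 := by
          intro β hβ
          have := Finset.sum_eq_zero_iff_of_nonneg
            (fun β hβ => by exact_mod_cast hcn β hβ : ∀ β ∈ Δ, (0:ℝ) ≤ (c β : ℝ))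
          exact (this.mp h0) β hβ
        apply hRS.nonzero α hα
        rw [hc]
        apply Finset.sum_eq_zero
        intro β hβ
        rw [hall β hβ, zero_smul]
      · rw [hfval α hα c hc]
        intro h0
        have hall : ∀ β ∈ Δ, (c β : ℝ) = 0 := by
          intro β hβ
          have hnn : ∀ β ∈ Δ, (0:ℝ) ≤ (-(c β) : ℝ) := by
            intro β hβ
            have := hcn β hβ
            push_cast
            linarith [(by exact_mod_cast this : ((c β : ℝ)) ≤ 0)]
          have hsum : ∑ β ∈ Δ, (-(c β) : ℝ) = 0 := by
            push_cast
            rw [Finset.sum_neg_distrib, h0, neg_zero]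
          have := (Finset.sum_eq_zero_iff_of_nonneg hnn).mp hsum β hβ
          push_cast at this ⊢
          linarith
        apply hRS.nonzero α hα
        rw [hc]
        apply Finset.sum_eq_zero
        intro β hβ
        rw [hall β hβ, zero_smul]
  · rintro ⟨f, hfcw, hfσ, hfne⟩
    have hfσ' : ∀ v, f (σ.symm v) = f v := fun v => LinearMap.ext_iff.mp hfσ v
    have hfσ'' : ∀ v, f (σ v) = f v := by
      intro v
      have := hfσ' (σ v)
      rw [σ.symm_apply_apply] at this
      exact this.symm
    refine ⟨baseSet R f, baseSet_isBase R hRS f hfcw hfne, ?_⟩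
    have hσP : ∀ {α : V}, α ∈ posSet R f → σ α ∈ posSet R f := by
      intro α hα
      obtain ⟨h1, h2⟩ := mem_posSet.mp hα
      exact mem_posSet.mpr ⟨hσR h1, by rwa [hfσ'']⟩
    have hσP' : ∀ {α : V}, α ∈ posSet R f → σ.symm α ∈ posSet R f := by
      intro α hα
      obtain ⟨h1, h2⟩ := mem_posSet.mp hα
      exact mem_posSet.mpr ⟨hσR' h1, by rwa [hfσ']⟩
    have hσΔ : ∀ {α : V}, α ∈ baseSet R f → σ α ∈ baseSet R f := by
      intro α hα
      obtain ⟨h1, h2⟩ := mem_baseSet.mp hα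
      refine mem_baseSet.mpr ⟨hσP h1, ?_⟩
      rintro ⟨β, hβ, γ, hγ, heq⟩
      apply h2
      refine ⟨σ.symm β, hσP' hβ, σ.symm γ, hσP' hγ, ?_⟩
      have := congrArg σ.symm heq
      rw [σ.symm_apply_apply, map_add] at this
      exact this
    have hσΔ' : ∀ {α : V}, α ∈ baseSet R f → σ.symm α ∈ baseSet R f := by
      intro α hα
      obtain ⟨h1, h2⟩ := mem_baseSet.mp hα
      refine mem_baseSet.mpr ⟨hσP' h1, ?_⟩
      rintro ⟨β, hβ, γ, hγ, heq⟩
      apply h2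
      refine ⟨σ β, hσP hβ, σ γ, hσP hγ, ?_⟩
      have := congrArg σ heq
      rw [σ.apply_symm_apply, map_add] at this
      exact this
    apply Set.Subset.antisymm
    · rintro x ⟨α, hα, rfl⟩
      exact Finset.mem_coe.mpr (hσΔ (Finset.mem_coe.mp hα))
    · intro α hα
      exact ⟨σ.symm α, Finset.mem_coe.mpr (hσΔ' (Finset.mem_coe.mp hα)), σ.apply_symm_apply α⟩
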